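/- Let X be a Banach space whose weak*-closure of Ext B_{X*} intersected with the unit sphere S_{X*} is connected in the weak* topology. Then X cannot be U-embedded into any C(K) space for a compact Hausdorff K. -/

import Mathlib

set_option maxHeartbeats 1000000

open NormedSpace

universe u

section Aux

open Set Metric

variable {K : Type u} [TopologicalSpace K] [CompactSpace K]

/-- A nonzero multiplicative linear functional on `C(K, ℝ)` is a point evaluation. -/
lemma UEmb.mult_eval (lam : C(K, ℝ) →ₗ[ℝ] ℝ)
    (hmul : ∀ f g : C(K, ℝ), lam (f * g) = lam f * lam g) (hone : lam 1 = 1) :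
    ∃ k : K, ∀ f : C(K, ℝ), lam f = f k := by
  by_contra h
  push_neg at h
  have h' : ∀ k : K, ∃ g : C(K, ℝ), lam g = 0 ∧ g k ≠ 0 := by
    intro k
    obtain ⟨f, hf⟩ := h k
    refine ⟨f - lam f • 1, ?_, ?_⟩
    · simp [map_sub, map_smul, hone]
    · simp only [ContinuousMap.sub_apply, ContinuousMap.smul_apply, ContinuousMap.one_apply,
        smul_eq_mul, mul_one, sub_ne_zero]
      exact fun hh => hf hh.symm
  choose g hg0 hgk using h'
  have hcov : (Set.univ : Set K) ⊆ ⋃ k, (g k) ⁻¹' ({(0:ℝ)}ᶜ) := by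
    intro x _
    exact Set.mem_iUnion.2 ⟨x, hgk x⟩
  obtain ⟨s, hs⟩ := isCompact_univ.elim_finite_subcover (fun k => (g k) ⁻¹' ({(0:ℝ)}ᶜ))
    (fun k => (isOpen_compl_singleton).preimage (g k).continuous) hcov
  set hfun : C(K, ℝ) := ∑ i ∈ s, (g i) * (g i) with hhdef
  have hpos : ∀ x : K, 0 < hfun x := by
    intro x
    obtain ⟨i, his, hix⟩ := by
      have := hs (Set.mem_univ x)
      simpa using this
    have happ : hfun x = ∑ i ∈ s, (g i x) * (g i x) := by
      simp [hhdef]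
    rw [happ]
    apply Finset.sum_pos' (fun j _ => mul_self_nonneg _)
    exact ⟨i, his, mul_self_pos.2 hix⟩
  have hlamh : lam hfun = 0 := by
    rw [hhdef, map_sum]
    apply Finset.sum_eq_zero
    intro i _
    rw [hmul, hg0, zero_mul]
  set hinv : C(K, ℝ) := ⟨fun x => (hfun x)⁻¹,
    Continuous.inv₀ hfun.continuous (fun x => (hpos x).ne')⟩ with hinvdef
  have hmulinv : hfun * hinv = 1 := by
    ext x
    simp only [ContinuousMap.mul_apply, ContinuousMap.one_apply, hinvdef,
      ContinuousMap.coe_mk]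
    exact mul_inv_cancel₀ (hpos x).ne'
  have : (1 : ℝ) = 0 := by
    calc (1:ℝ) = lam 1 := hone.symm
    _ = lam (hfun * hinv) := by rw [hmulinv]
    _ = lam hfun * lam hinv := hmul _ _
    _ = 0 := by rw [hlamh, zero_mul]
  exact one_ne_zero this

lemma UEmb.norm_evalCLM [Nonempty K] (k : K) :
    ‖(ContinuousMap.evalCLM ℝ k : C(K, ℝ) →L[ℝ] ℝ)‖ = 1 := by
  apply le_antisymm
  · exact ContinuousLinearMap.opNorm_le_bound _ zero_le_one
      (fun f => by simpa using f.norm_coe_le_norm k)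
  · have h := (ContinuousMap.evalCLM ℝ k : C(K, ℝ) →L[ℝ] ℝ).le_opNorm 1
    rw [show (ContinuousMap.evalCLM ℝ k : C(K, ℝ) →L[ℝ] ℝ) 1 = 1 from rfl] at h
    simpa using h

lemma UEmb.norm_eq_one_of_extreme {E : Type*} [NormedAddCommGroup E] [NormedSpace ℝ E]
    {g : E →L[ℝ] ℝ} (hg : g ∈ Set.extremePoints ℝ (closedBall (0 : E →L[ℝ] ℝ) 1))
    (v : E →L[ℝ] ℝ) (hv : ‖v‖ = 1) : ‖g‖ = 1 := by
  obtain ⟨hmem, hext⟩ := hg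
  rw [mem_closedBall, dist_zero_right] at hmem
  by_contra hne
  have hlt : ‖g‖ < 1 := lt_of_le_of_ne hmem hne
  set ε := 1 - ‖g‖ with hε
  have hε0 : 0 < ε := by rw [hε]; linarith
  have hεv : ‖ε • v‖ = ε := by
    rw [show ‖ε • v‖ = ‖ε‖ * ‖v‖ from norm_smul ε v, hv, mul_one, Real.norm_eq_abs,
      abs_of_pos hε0]
  have h1 : g + ε • v ∈ closedBall (0 : E →L[ℝ] ℝ) 1 := by
    rw [mem_closedBall, dist_zero_right]
    calc ‖g + ε • v‖ ≤ ‖g‖ + ‖ε • v‖ := norm_add_le _ _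
    _ = 1 := by rw [hεv, hε]; ring
  have h2 : g - ε • v ∈ closedBall (0 : E →L[ℝ] ℝ) 1 := by
    rw [mem_closedBall, dist_zero_right]
    calc ‖g - ε • v‖ ≤ ‖g‖ + ‖ε • v‖ := norm_sub_le _ _
    _ = 1 := by rw [hεv, hε]; ring
  have hseg : g ∈ openSegment ℝ (g + ε • v) (g - ε • v) :=
    ⟨1/2, 1/2, by norm_num, by norm_num, by norm_num, by module⟩
  have := hext h1 h2 hseg
  have hv0 : ε • v = 0 := by
    rw [← add_sub_cancel_left g (ε • v), this, sub_self]
  have : v = 0 := by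
    have hv1 : v = ε⁻¹ • (ε • v) := by
      rw [smul_smul, inv_mul_cancel₀ hε0.ne', one_smul]
    rw [hv1, hv0, smul_zero]
  rw [this, norm_zero] at hv
  exact one_ne_zero hv.symm

end Aux

lemma UEmb.norm_smul' {V : Type*} [SeminormedAddCommGroup V] [NormedSpace ℝ V] (c : ℝ) (v : V) :
    ‖c • v‖ = |c| * ‖v‖ := by
  rcases eq_or_ne c 0 with rfl | hc
  · simp
  · refine le_antisymm (by simpa using _root_.norm_smul_le c v) ?_
    have h2 : ‖v‖ ≤ |c|⁻¹ * ‖c • v‖ := by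
      have h3 := _root_.norm_smul_le c⁻¹ (c • v)
      rwa [smul_smul, inv_mul_cancel₀ hc, one_smul, Real.norm_eq_abs, abs_inv] at h3
    calc |c| * ‖v‖ ≤ |c| * (|c|⁻¹ * ‖c • v‖) :=
        mul_le_mul_of_nonneg_left h2 (abs_nonneg c)
    _ = ‖c • v‖ := by field_simp

section AK

open Set Metric

variable {K : Type u} [TopologicalSpace K] [CompactSpace K]

/-- Arens–Kelley: extreme points of the dual unit ball of `C(K, ℝ)` are `± evaluation`. -/
lemma UEmb.extreme_dual_ball [Nonempty K] {g : C(K, ℝ) →L[ℝ] ℝ}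
    (hg : g ∈ Set.extremePoints ℝ (closedBall (0 : C(K, ℝ) →L[ℝ] ℝ) 1)) :
    ∃ k : K, g = ContinuousMap.evalCLM ℝ k ∨ g = -(ContinuousMap.evalCLM ℝ k) := by
  have hgnorm : ‖g‖ = 1 :=
    UEmb.norm_eq_one_of_extreme hg _ (UEmb.norm_evalCLM (Classical.arbitrary K))
  -- the "multiplication by φ" trick
  have key : ∀ φ : C(K, ℝ), (∀ x, φ x ∈ Icc (0:ℝ) 1) →
      ∃ c : ℝ, ∀ ψ : C(K, ℝ), g (φ * ψ) = c * g ψ := by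
    intro φ hφ
    set g₁ : C(K, ℝ) →L[ℝ] ℝ := g.comp ((ContinuousLinearMap.mul ℝ C(K, ℝ)) φ) with hg₁
    set g₂ : C(K, ℝ) →L[ℝ] ℝ := g.comp ((ContinuousLinearMap.mul ℝ C(K, ℝ)) (1 - φ)) with hg₂
    have hg₁app : ∀ ψ, g₁ ψ = g (φ * ψ) := fun ψ => rfl
    have hg₂app : ∀ ψ, g₂ ψ = g ((1 - φ) * ψ) := fun ψ => rfl
    have hsum : g₁ + g₂ = g := by
      ext ψ
      simp only [ContinuousLinearMap.add_apply, hg₁app, hg₂app]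
      rw [← map_add]
      congr 1
      ring
    -- pairwise bound
    have pair : ∀ ψ χ : C(K, ℝ), ‖ψ‖ ≤ 1 → ‖χ‖ ≤ 1 → g (φ * ψ) + g ((1 - φ) * χ) ≤ 1 := by
      intro ψ χ hψ hχ
      have hb : ‖φ * ψ + (1 - φ) * χ‖ ≤ 1 := by
        apply ContinuousMap.norm_le _ zero_le_one |>.2
        intro x
        have h1 : |ψ x| ≤ 1 := le_trans (ψ.norm_coe_le_norm x) hψ
        have h2 : |χ x| ≤ 1 := le_trans (χ.norm_coe_le_norm x) hχ
        have h3 := (hφ x).1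
        have h4 := (hφ x).2
        simp only [ContinuousMap.add_apply, ContinuousMap.mul_apply, ContinuousMap.sub_apply,
          ContinuousMap.one_apply, Real.norm_eq_abs]
        calc |φ x * ψ x + (1 - φ x) * χ x| ≤ |φ x * ψ x| + |(1 - φ x) * χ x| := abs_add_le _ _
        _ = φ x * |ψ x| + (1 - φ x) * |χ x| := by
            rw [abs_mul, abs_mul, abs_of_nonneg h3,
              abs_of_nonneg (show (0:ℝ) ≤ 1 - φ x by linarith)]
        _ ≤ φ x * 1 + (1 - φ x) * 1 :=
            add_le_add (mul_le_mul_of_nonneg_left h1 h3)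
              (mul_le_mul_of_nonneg_left h2 (by linarith))
        _ = 1 := by ring
      calc g (φ * ψ) + g ((1 - φ) * χ) = g (φ * ψ + (1 - φ) * χ) := (map_add g _ _).symm
      _ ≤ |g (φ * ψ + (1 - φ) * χ)| := le_abs_self _
      _ ≤ ‖g‖ * ‖φ * ψ + (1 - φ) * χ‖ := g.le_opNorm _
      _ ≤ 1 := by rw [hgnorm, one_mul]; exact hb
    have pairabs : ∀ ψ χ : C(K, ℝ), ‖ψ‖ ≤ 1 → ‖χ‖ ≤ 1 → |g₁ ψ| + |g₂ χ| ≤ 1 := by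
      intro ψ χ hψ hχ
      have habs1 : |g₁ ψ| = g₁ ψ ∨ |g₁ ψ| = g₁ (-ψ) := by
        rcases abs_cases (g₁ ψ) with ⟨h, _⟩ | ⟨h, _⟩
        · exact Or.inl h
        · exact Or.inr (by rw [map_neg]; exact h)
      have habs2 : |g₂ χ| = g₂ χ ∨ |g₂ χ| = g₂ (-χ) := by
        rcases abs_cases (g₂ χ) with ⟨h, _⟩ | ⟨h, _⟩
        · exact Or.inl h
        · exact Or.inr (by rw [map_neg]; exact h)
      have hψ' : ‖-ψ‖ ≤ 1 := by rwa [norm_neg]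
      have hχ' : ‖-χ‖ ≤ 1 := by rwa [norm_neg]
      have e1 : g₁ (-ψ) = g (φ * (-ψ)) := hg₁app _
      have e2 : g₂ (-χ) = g ((1 - φ) * (-χ)) := hg₂app _
      rcases habs1 with h1 | h1 <;> rcases habs2 with h2 | h2 <;> rw [h1, h2] <;>
        rw [hg₁app, hg₂app] <;>
        [exact pair ψ χ hψ hχ; exact pair ψ (-χ) hψ hχ'; exact pair (-ψ) χ hψ' hχ;
          exact pair (-ψ) (-χ) hψ' hχ']
    have hb2 : ∀ ψ : C(K, ℝ), ‖ψ‖ = 1 → ‖g₂‖ ≤ 1 - |g₁ ψ| := by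
      intro ψ hψ
      have h0 : |g₁ ψ| ≤ 1 := by
        have := pairabs ψ 0 hψ.le (by simp)
        simpa using this
      apply ContinuousLinearMap.opNorm_le_of_unit_norm (by linarith)
      intro χ hχ
      have := pairabs ψ χ hψ.le hχ.le
      rw [Real.norm_eq_abs]
      linarith
    have hsum_norm : ‖g₁‖ + ‖g₂‖ = 1 := by
      have hle : ‖g₁‖ ≤ 1 - ‖g₂‖ := by
        apply ContinuousLinearMap.opNorm_le_of_unit_norm
        · have h1 : ‖g₂‖ ≤ 1 - |g₁ 1| := hb2 1 norm_one
          have := abs_nonneg (g₁ 1)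
          linarith
        · intro ψ hψ
          have := hb2 ψ hψ
          rw [Real.norm_eq_abs]
          linarith
      have hge : 1 ≤ ‖g₁‖ + ‖g₂‖ := by
        calc (1:ℝ) = ‖g‖ := hgnorm.symm
        _ = ‖g₁ + g₂‖ := by rw [hsum]
        _ ≤ ‖g₁‖ + ‖g₂‖ := norm_add_le g₁ g₂
      linarith
    by_cases h1 : ‖g₁‖ = 0
    · refine ⟨0, fun ψ => ?_⟩
      have hz : g₁ = 0 := (ContinuousLinearMap.opNorm_zero_iff g₁).mp h1
      rw [← hg₁app, hz]
      simp
    by_cases h2 : ‖g₂‖ = 0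
    · refine ⟨1, fun ψ => ?_⟩
      have hz : g₂ = 0 := (ContinuousLinearMap.opNorm_zero_iff g₂).mp h2
      have hgg : g₁ = g := by rw [← hsum, hz, add_zero]
      rw [← hg₁app, hgg, one_mul]
    · have ha : 0 < ‖g₁‖ := lt_of_le_of_ne (norm_nonneg g₁) (Ne.symm h1)
      have hbp : 0 < ‖g₂‖ := lt_of_le_of_ne (norm_nonneg g₂) (Ne.symm h2)
      have hn1 : ‖‖g₁‖⁻¹ • g₁‖ = 1 := by
        rw [UEmb.norm_smul' (‖g₁‖⁻¹) g₁, abs_of_pos (inv_pos.2 ha), inv_mul_cancel₀ ha.ne']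
      have hn2 : ‖‖g₂‖⁻¹ • g₂‖ = 1 := by
        rw [UEmb.norm_smul' (‖g₂‖⁻¹) g₂, abs_of_pos (inv_pos.2 hbp), inv_mul_cancel₀ hbp.ne']
      have hmem1 : ‖g₁‖⁻¹ • g₁ ∈ closedBall (0 : C(K, ℝ) →L[ℝ] ℝ) 1 := by
        rw [Metric.mem_closedBall,
          show dist (‖g₁‖⁻¹ • g₁) (0 : C(K, ℝ) →L[ℝ] ℝ) = ‖‖g₁‖⁻¹ • g₁‖ from dist_zero_right (‖g₁‖⁻¹ • g₁),
          hn1]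
      have hmem2 : ‖g₂‖⁻¹ • g₂ ∈ closedBall (0 : C(K, ℝ) →L[ℝ] ℝ) 1 := by
        rw [Metric.mem_closedBall,
          show dist (‖g₂‖⁻¹ • g₂) (0 : C(K, ℝ) →L[ℝ] ℝ) = ‖‖g₂‖⁻¹ • g₂‖ from dist_zero_right (‖g₂‖⁻¹ • g₂),
          hn2]
      have hseg : g ∈ openSegment ℝ (‖g₁‖⁻¹ • g₁) (‖g₂‖⁻¹ • g₂) :=
        ⟨‖g₁‖, ‖g₂‖, ha, hbp, hsum_norm, by
          rw [smul_smul, smul_smul, mul_inv_cancel₀ ha.ne', mul_inv_cancel₀ hbp.ne',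
            one_smul, one_smul, hsum]⟩
      have hy := hg.2 hmem1 hmem2 hseg
      refine ⟨‖g₁‖, fun ψ => ?_⟩
      have hgg : g₁ = ‖g₁‖ • g := by
        rw [← hy, smul_smul, mul_inv_cancel₀ ha.ne', one_smul]
      have h5 := congrArg (fun u : C(K, ℝ) →L[ℝ] ℝ => u ψ) hgg
      simp only [ContinuousLinearMap.coe_smul', Pi.smul_apply, smul_eq_mul] at h5
      rw [← hg₁app]
      exact h5
  -- `g` does not vanish somewhere
  have hgne : ∃ ψ₀ : C(K, ℝ), g ψ₀ ≠ 0 := by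
    by_contra h
    push_neg at h
    have hz : ‖g‖ ≤ 0 := g.opNorm_le_bound le_rfl (fun ψ => by simp [h ψ])
    rw [hgnorm] at hz
    linarith
  obtain ⟨ψ₀, hψ₀⟩ := hgne
  have hIcc : ∀ φ : C(K, ℝ), (∀ x, φ x ∈ Icc (0:ℝ) 1) →
      ∀ ψ, g (φ * ψ) * g ψ₀ = g (φ * ψ₀) * g ψ := by
    intro φ hφ ψ
    obtain ⟨c, hc⟩ := key φ hφ
    rw [hc ψ, hc ψ₀]
    ring
  have honeIcc : ∀ x : K, (1 : C(K, ℝ)) x ∈ Icc (0:ℝ) 1 := fun x => by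
    simp [ContinuousMap.one_apply]
  have hkey : ∀ φ ψ : C(K, ℝ), g (φ * ψ) * g ψ₀ = g (φ * ψ₀) * g ψ := by
    intro φ ψ
    by_cases hφ0 : φ = 0
    · simp [hφ0]
    · set r := ‖φ‖ with hr
      have hrpos : 0 < r := norm_pos_iff.2 hφ0
      set φ' : C(K, ℝ) := (2 * r)⁻¹ • (φ + r • 1) with hφ'
      have hφ'Icc : ∀ x, φ' x ∈ Icc (0:ℝ) 1 := by
        intro x
        have habs : |φ x| ≤ r := φ.norm_coe_le_norm x
        obtain ⟨hg1, hg2⟩ := abs_le.1 habs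
        have happ : φ' x = (2 * r)⁻¹ * (φ x + r) := by
          simp only [hφ', ContinuousMap.smul_apply, ContinuousMap.add_apply,
            ContinuousMap.one_apply, smul_eq_mul]
          ring
        rw [happ]
        constructor
        · exact mul_nonneg (by positivity) (by linarith)
        · rw [inv_mul_le_iff₀ (by positivity)]
          linarith
      have hmulχ : ∀ χ : C(K, ℝ), φ * χ = (2 * r) • (φ' * χ) - r • ((1 : C(K, ℝ)) * χ) := by
        intro χ
        ext x
        simp only [ContinuousMap.mul_apply, ContinuousMap.sub_apply, ContinuousMap.smul_apply,
          ContinuousMap.add_apply, ContinuousMap.one_apply, smul_eq_mul, hφ']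
        field_simp
        ring
      have e1 := hIcc φ' hφ'Icc ψ
      have e2 := hIcc 1 honeIcc ψ
      rw [hmulχ ψ, hmulχ ψ₀, map_sub, map_sub, map_smul, map_smul, map_smul, map_smul]
      simp only [smul_eq_mul]
      linear_combination (2 * r) * e1 - r * e2
  -- the character associated to `g`
  set lam : C(K, ℝ) →ₗ[ℝ] ℝ :=
    { toFun := fun φ => g (φ * ψ₀) / g ψ₀
      map_add' := fun φ χ => by
        show g ((φ + χ) * ψ₀) / g ψ₀ = g (φ * ψ₀) / g ψ₀ + g (χ * ψ₀) / g ψ₀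
        rw [add_mul, map_add, add_div]
      map_smul' := fun c φ => by
        show g ((c • φ) * ψ₀) / g ψ₀ = c * (g (φ * ψ₀) / g ψ₀)
        rw [smul_mul_assoc, map_smul]
        simp only [smul_eq_mul]
        ring } with hlam
  have hlamapp : ∀ φ, lam φ = g (φ * ψ₀) / g ψ₀ := fun φ => rfl
  have hlmul : ∀ φ χ : C(K, ℝ), lam (φ * χ) = lam φ * lam χ := by
    intro φ χ
    have h := hkey φ (χ * ψ₀)
    rw [hlamapp, hlamapp, hlamapp, mul_assoc, div_mul_div_comm,
      div_eq_div_iff hψ₀ (mul_ne_zero hψ₀ hψ₀)]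
    linear_combination g ψ₀ * h
  have hlone : lam 1 = 1 := by rw [hlamapp, one_mul, div_self hψ₀]
  obtain ⟨k, hk⟩ := UEmb.mult_eval lam hlmul hlone
  have geval : ∀ ψ : C(K, ℝ), g ψ = ψ k * g 1 := by
    intro ψ
    have h := hkey ψ 1
    rw [mul_one] at h
    have h2 : g (ψ * ψ₀) = ψ k * g ψ₀ := by
      have hh := hk ψ
      rw [hlamapp] at hh
      field_simp at hh
      linarith [hh]
    rw [h2, show ψ k * g ψ₀ * g 1 = (ψ k * g 1) * g ψ₀ from by ring] at h
    exact mul_right_cancel₀ hψ₀ h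
  have hg1 : |g 1| = 1 := by
    have hle : ‖g‖ ≤ |g 1| := by
      apply ContinuousLinearMap.opNorm_le_bound _ (abs_nonneg _)
      intro ψ
      rw [Real.norm_eq_abs, geval ψ, abs_mul]
      calc |ψ k| * |g 1| ≤ ‖ψ‖ * |g 1| :=
          mul_le_mul_of_nonneg_right (by simpa using ψ.norm_coe_le_norm k) (abs_nonneg _)
      _ = |g 1| * ‖ψ‖ := mul_comm _ _
    have hge : |g 1| ≤ ‖g‖ := by
      have := g.le_opNorm 1
      rwa [norm_one, mul_one, Real.norm_eq_abs] at this
    rw [hgnorm] at hle hge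
    linarith
  rcases (abs_eq zero_le_one).1 hg1 with h | h
  · exact ⟨k, Or.inl (ContinuousLinearMap.ext fun ψ => by
      rw [geval ψ, h, mul_one]; rfl)⟩
  · refine ⟨k, Or.inr (ContinuousLinearMap.ext fun ψ => ?_)⟩
    rw [geval ψ, h]
    show ψ k * (-1) = -(ψ k)
    ring

end AK

section HB

open Set Metric

variable {X : Type*} [NormedAddCommGroup X] [NormedSpace ℝ X]
variable {K : Type u} [TopologicalSpace K] [CompactSpace K]

/-- Norm preserving extension along a linear isometry. -/
lemma UEmb.exists_extension (T : X →ₗᵢ[ℝ] C(K, ℝ)) (e : X →L[ℝ] ℝ) :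
    ∃ g : C(K, ℝ) →L[ℝ] ℝ, (∀ x : X, g (T x) = e x) ∧ ‖g‖ = ‖e‖ := by
  set p : Subspace ℝ C(K, ℝ) := LinearMap.range T.toLinearMap with hp
  set Eq := T.equivRange with hEq
  set f : p →L[ℝ] ℝ := e.comp Eq.symm.toLinearIsometry.toContinuousLinearMap with hf
  obtain ⟨g, hg, hnorm⟩ := exists_extension_norm_eq p f
  refine ⟨g, fun x => ?_, ?_⟩
  · have hmem : T x ∈ p := ⟨x, rfl⟩
    have h1 : g (T x) = f ⟨T x, hmem⟩ := hg ⟨T x, hmem⟩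
    have h2 : f ⟨T x, hmem⟩ = e (Eq.symm ⟨T x, hmem⟩) := rfl
    have h3 : Eq.symm ⟨T x, hmem⟩ = x := by
      apply Eq.injective
      rw [LinearIsometryEquiv.apply_symm_apply]
      ext
      rfl
    rw [h1, h2, h3]
  · rw [hnorm]
    apply le_antisymm
    · refine ContinuousLinearMap.opNorm_le_bound _ (norm_nonneg e) (fun y => ?_)
      calc ‖f y‖ = ‖e (Eq.symm y)‖ := rfl
      _ ≤ ‖e‖ * ‖Eq.symm y‖ := e.le_opNorm _
      _ = ‖e‖ * ‖y‖ := by rw [LinearIsometryEquiv.norm_map]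
    · refine ContinuousLinearMap.opNorm_le_bound _ (ContinuousLinearMap.opNorm_nonneg _) (fun x => ?_)
      have hmem : T x ∈ p := ⟨x, rfl⟩
      have h3 : Eq.symm ⟨T x, hmem⟩ = x := by
        apply Eq.injective
        rw [LinearIsometryEquiv.apply_symm_apply]
        ext
        rfl
      have h := ContinuousLinearMap.le_opNorm (𝕜 := ℝ) (𝕜₂ := ℝ) (σ₁₂ := RingHom.id ℝ) (E := p) (F := ℝ) f (⟨T x, hmem⟩ : p)
      have h2 : f ⟨T x, hmem⟩ = e (Eq.symm ⟨T x, hmem⟩) := rfl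
      rw [h2, h3] at h
      refine h.trans (le_of_eq ?_)
      congr 1
      exact T.norm_map x

end HB

section KM

open Set Metric

variable {X : Type*} [NormedAddCommGroup X] [NormedSpace ℝ X]
variable {K : Type u} [TopologicalSpace K] [CompactSpace K]

instance (E : Type*) [AddCommGroup E] [Module ℝ E] [TopologicalSpace E] :
    LocallyConvexSpace ℝ (WeakDual ℝ E) :=
  WeakBilin.locallyConvexSpace

lemma UEmb.extreme_restriction [Nonempty K] (T : X →ₗᵢ[ℝ] C(K, ℝ)) {e : X →L[ℝ] ℝ}
    (he : e ∈ Set.extremePoints ℝ (closedBall (0 : X →L[ℝ] ℝ) 1)) :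
    ∃ k : K, e = (ContinuousMap.evalCLM ℝ k).comp T.toContinuousLinearMap ∨
      e = -((ContinuousMap.evalCLM ℝ k).comp T.toContinuousLinearMap) := by
  have hemem : ‖e‖ ≤ 1 := by
    have h := he.1
    rwa [mem_closedBall, show dist e (0 : X →L[ℝ] ℝ) = ‖e‖ from dist_zero_right e] at h
  set B : Set (WeakDual ℝ C(K, ℝ)) := ⇑WeakDual.toStrongDual ⁻¹' closedBall 0 1 with hB
  set F : Set (WeakDual ℝ C(K, ℝ)) := {g | ∀ x : X, g (T x) = e x} ∩ B with hF
  have hBmem : ∀ g : WeakDual ℝ C(K, ℝ), g ∈ B ↔ ‖WeakDual.toStrongDual g‖ ≤ 1 := by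
    intro g
    rw [hB, Set.mem_preimage, mem_closedBall,
      show dist (WeakDual.toStrongDual g) (0 : C(K, ℝ) →L[ℝ] ℝ) = ‖WeakDual.toStrongDual g‖
        from dist_zero_right (WeakDual.toStrongDual g)]
  have hclosed : IsClosed {g : WeakDual ℝ C(K, ℝ) | ∀ x : X, g (T x) = e x} := by
    have hiff : {g : WeakDual ℝ C(K, ℝ) | ∀ x : X, g (T x) = e x} =
        ⋂ x : X, {g : WeakDual ℝ C(K, ℝ) | g (T x) = e x} := by
      ext g
      simp [Set.mem_iInter]
    rw [hiff]
    exact isClosed_iInter fun x => isClosed_eq (WeakDual.eval_continuous (T x)) continuous_const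
  have hcomp : IsCompact F :=
    (WeakDual.isCompact_closedBall (𝕜 := ℝ) (E := C(K, ℝ)) 0 1).inter_left hclosed
  have hFne : F.Nonempty := by
    obtain ⟨g, hgx, hgn⟩ := UEmb.exists_extension T e
    refine ⟨StrongDual.toWeakDual g, fun x => hgx x, ?_⟩
    rw [hBmem]
    show ‖g‖ ≤ 1
    rw [hgn]
    exact hemem
  obtain ⟨g, hgF⟩ := hcomp.extremePoints_nonempty hFne
  obtain ⟨⟨hgeq, hgB⟩, hgmin⟩ := hgF
  set g' : C(K, ℝ) →L[ℝ] ℝ := WeakDual.toStrongDual g with hg'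
  have hg'ball : g' ∈ closedBall (0 : C(K, ℝ) →L[ℝ] ℝ) 1 := hgB
  have hg'ext : g' ∈ Set.extremePoints ℝ (closedBall (0 : C(K, ℝ) →L[ℝ] ℝ) 1) := by
    refine ⟨hg'ball, ?_⟩
    intro y hy z hz hseg
    obtain ⟨a, b, ha, hb, hab, hsum⟩ := hseg
    set ry : X →L[ℝ] ℝ := y.comp T.toContinuousLinearMap with hry
    set rz : X →L[ℝ] ℝ := z.comp T.toContinuousLinearMap with hrz
    have hyn : ‖y‖ ≤ 1 := by
      rwa [mem_closedBall, show dist y (0 : C(K, ℝ) →L[ℝ] ℝ) = ‖y‖ from dist_zero_right y] at hy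
    have hzn : ‖z‖ ≤ 1 := by
      rwa [mem_closedBall, show dist z (0 : C(K, ℝ) →L[ℝ] ℝ) = ‖z‖ from dist_zero_right z] at hz
    have hres : ∀ (w : C(K, ℝ) →L[ℝ] ℝ), ‖w‖ ≤ 1 →
        w.comp T.toContinuousLinearMap ∈ closedBall (0 : X →L[ℝ] ℝ) 1 := by
      intro w hw
      have hn : ‖w.comp T.toContinuousLinearMap‖ ≤ 1 := by
        apply ContinuousLinearMap.opNorm_le_bound _ zero_le_one
        intro x
        calc ‖w (T x)‖ ≤ ‖w‖ * ‖T x‖ := w.le_opNorm _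
        _ = ‖w‖ * ‖x‖ := by rw [T.norm_map]
        _ ≤ 1 * ‖x‖ := mul_le_mul_of_nonneg_right hw (norm_nonneg x)
      rw [mem_closedBall, show dist (w.comp T.toContinuousLinearMap) (0 : X →L[ℝ] ℝ)
        = ‖w.comp T.toContinuousLinearMap‖ from dist_zero_right (w.comp T.toContinuousLinearMap)]
      exact hn
    have heseg : e ∈ openSegment ℝ ry rz := by
      refine ⟨a, b, ha, hb, hab, ?_⟩
      ext x
      have happ := congrArg (fun u : C(K, ℝ) →L[ℝ] ℝ => u (T x)) hsum
      simp only [ContinuousLinearMap.add_apply, ContinuousLinearMap.coe_smul', Pi.smul_apply,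
        smul_eq_mul] at happ
      have hgx : g' (T x) = e x := hgeq x
      show a * ry x + b * rz x = e x
      calc a * ry x + b * rz x = a * y (T x) + b * z (T x) := rfl
      _ = g' (T x) := happ
      _ = e x := hgx
    have hrye := he.2 (hres y hyn) (hres z hzn) heseg
    have hrze := he.2 (hres z hzn) (hres y hyn) (by rw [openSegment_symm]; exact heseg)
    have hyF : StrongDual.toWeakDual y ∈ F := by
      refine ⟨fun x => ?_, (hBmem _).2 (by show ‖y‖ ≤ 1; exact hyn)⟩
      show y (T x) = e x
      exact congrArg (fun u : X →L[ℝ] ℝ => u x) hrye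
    have hzF : StrongDual.toWeakDual z ∈ F := by
      refine ⟨fun x => ?_, (hBmem _).2 (by show ‖z‖ ≤ 1; exact hzn)⟩
      show z (T x) = e x
      exact congrArg (fun u : X →L[ℝ] ℝ => u x) hrze
    have hgseg : g ∈ openSegment ℝ (StrongDual.toWeakDual y) (StrongDual.toWeakDual z) := by
      refine ⟨a, b, ha, hb, hab, ?_⟩
      have hc := congrArg StrongDual.toWeakDual hsum
      rw [map_add, map_smul, map_smul] at hc
      exact hc
    have h1 := hgmin hyF hzF hgseg
    · calc y = WeakDual.toStrongDual (StrongDual.toWeakDual y) := rfl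
      _ = WeakDual.toStrongDual g := by rw [h1]
      _ = g' := rfl
  obtain ⟨k, hk⟩ := UEmb.extreme_dual_ball hg'ext
  rcases hk with h | h
  · refine ⟨k, Or.inl ?_⟩
    ext x
    have hx : g' (T x) = e x := hgeq x
    rw [h] at hx
    exact hx.symm
  · refine ⟨k, Or.inr ?_⟩
    ext x
    have hx : g' (T x) = e x := hgeq x
    rw [h] at hx
    rw [← hx]
    rfl

end KM

section Main

open Set Metric

lemma UEmb.neg_extreme {V : Type*} [NormedAddCommGroup V] [NormedSpace ℝ V]
    {e : V} (he : e ∈ Set.extremePoints ℝ (Metric.closedBall (0 : V) 1)) :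
    -e ∈ Set.extremePoints ℝ (Metric.closedBall (0 : V) 1) := by
  obtain ⟨hmem, hext⟩ := he
  have hball : ∀ v : V, v ∈ Metric.closedBall (0 : V) 1 ↔ ‖v‖ ≤ 1 := fun v => by
    rw [Metric.mem_closedBall, show dist v (0 : V) = ‖v‖ from dist_zero_right v]
  refine ⟨(hball _).2 (by rw [norm_neg]; exact (hball e).1 hmem), ?_⟩
  intro y hy z hz hseg
  obtain ⟨a, b, ha, hb, hab, hsum⟩ := hseg
  have hnegseg : e ∈ openSegment ℝ (-y) (-z) := by
    refine ⟨a, b, ha, hb, hab, ?_⟩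
    rw [smul_neg, smul_neg, ← neg_add, hsum, neg_neg]
  have h1 := hext ((hball _).2 (by rw [norm_neg]; exact (hball y).1 hy))
    ((hball _).2 (by rw [norm_neg]; exact (hball z).1 hz)) hnegseg
  rw [← neg_neg y, h1]

end Main

universe v

/-- If the weak*-closure of the set of extreme points of `B_{X*}`, intersected with the
unit sphere `S_{X*}`, is connected in the weak* topology, then `X` cannot be U-embedded
into any `C(K)` space with `K` compact Hausdorff. -/
theorem no_UEmbedding_of_connected_extreme_sphere
    (X : Type*) [NormedAddCommGroup X] [NormedSpace ℝ X] [CompleteSpace X]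
    (hconn : IsConnected
      (closure (⇑StrongDual.toWeakDual ''
          Set.extremePoints ℝ (Metric.closedBall (0 : X →L[ℝ] ℝ) 1)) ∩
        {f : WeakDual ℝ X | ‖WeakDual.toStrongDual f‖ = 1})) :
    ∀ (K : Type u) [TopologicalSpace K] [CompactSpace K] [T2Space K]
      (T : X →ₗᵢ[ℝ] C(K, ℝ)),
      ¬ ∀ f : X →L[ℝ] ℝ, ∃! g : C(K, ℝ) →L[ℝ] ℝ,
          (∀ x : X, g (T x) = f x) ∧ ‖g‖ = ‖f‖ := by
  intro K _ _ _ T hU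
  set EXT : Set (WeakDual ℝ X) := ⇑StrongDual.toWeakDual ''
    Set.extremePoints ℝ (Metric.closedBall (0 : X →L[ℝ] ℝ) 1) with hEXT
  set SP : Set (WeakDual ℝ X) := {f : WeakDual ℝ X | ‖WeakDual.toStrongDual f‖ = 1} with hSP
  set C : Set (WeakDual ℝ X) := closure EXT ∩ SP with hC
  rcases isEmpty_or_nonempty K with hK | hK
  · -- `K` empty: `X = 0`, so the sphere is empty, contradicting connectedness
    obtain ⟨f, hf⟩ := hconn.nonempty
    have hx0 : ∀ x : X, x = 0 := by
      intro x
      have h1 : ‖T x‖ ≤ 0 := by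
        apply (ContinuousMap.norm_le _ le_rfl).2
        intro k
        exact isEmptyElim k
      have h2 : ‖x‖ ≤ 0 := by rw [← T.norm_map x]; exact h1
      exact norm_le_zero_iff.1 h2
    have hzero : WeakDual.toStrongDual f = 0 := by
      ext x
      rw [hx0 x, map_zero]
      rfl
    have h1 : ‖WeakDual.toStrongDual f‖ = 1 := hf.2
    rw [hzero, norm_zero] at h1
    exact zero_ne_one h1
  · set T' := T.toContinuousLinearMap with hT'
    set Φ : K → WeakDual ℝ X :=
      fun k => StrongDual.toWeakDual ((ContinuousMap.evalCLM ℝ k).comp T') with hΦ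
    have hΦcont : Continuous Φ := by
      apply WeakDual.continuous_of_continuous_eval
      intro x
      exact (T x).continuous
    have hcmpA : IsCompact (Set.range Φ) := isCompact_range hΦcont
    have hclA : IsClosed (Set.range Φ) := hcmpA.isClosed
    have hΦneg : Continuous fun k => -Φ k := hΦcont.neg
    have hclB : IsClosed (Set.range fun k => -Φ k) := (isCompact_range hΦneg).isClosed
    -- the cover
    have hcover : C ⊆ Set.range Φ ∪ Set.range (fun k => -Φ k) := by
      intro f hf
      have hf1 : f ∈ closure EXT := hf.1
      have hsub : EXT ⊆ Set.range Φ ∪ Set.range (fun k => -Φ k) := by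
        rintro _ ⟨e, he, rfl⟩
        obtain ⟨k, hk | hk⟩ := UEmb.extreme_restriction T he
        · exact Or.inl ⟨k, congrArg (⇑StrongDual.toWeakDual) hk.symm⟩
        · refine Or.inr ⟨k, ?_⟩
          show -Φ k = StrongDual.toWeakDual e
          rw [hk, map_neg]
      have hclosedU : IsClosed (Set.range Φ ∪ Set.range fun k => -Φ k) := hclA.union hclB
      exact hclosedU.closure_subset_iff.2 hsub hf1
    -- disjointness on the sphere
    have hdisj : ∀ f ∈ C, ¬ (f ∈ Set.range Φ ∧ f ∈ Set.range fun k => -Φ k) := by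
      rintro f hf ⟨⟨k, hk⟩, ⟨k', hk'⟩⟩
      set e : X →L[ℝ] ℝ := WeakDual.toStrongDual f with he
      have hen : ‖e‖ = 1 := hf.2
      have hext1 : (∀ x : X, (ContinuousMap.evalCLM ℝ k : C(K, ℝ) →L[ℝ] ℝ) (T x) = e x) ∧
          ‖(ContinuousMap.evalCLM ℝ k : C(K, ℝ) →L[ℝ] ℝ)‖ = ‖e‖ := by
        constructor
        · intro x
          have h1 := congrArg (fun u : WeakDual ℝ X => WeakDual.toStrongDual u x) hk
          exact h1
        · rw [UEmb.norm_evalCLM k, hen]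
      have hext2 : (∀ x : X, (-(ContinuousMap.evalCLM ℝ k' : C(K, ℝ) →L[ℝ] ℝ)) (T x) = e x) ∧
          ‖(-(ContinuousMap.evalCLM ℝ k' : C(K, ℝ) →L[ℝ] ℝ))‖ = ‖e‖ := by
        constructor
        · intro x
          have h1 := congrArg (fun u : WeakDual ℝ X => WeakDual.toStrongDual u x) hk'
          exact h1
        · rw [ContinuousLinearMap.opNorm_neg, UEmb.norm_evalCLM k', hen]
      have hUe := (hU e).unique hext1 hext2
      have h1 : (ContinuousMap.evalCLM ℝ k : C(K, ℝ) →L[ℝ] ℝ) 1 = 1 := rfl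
      rw [hUe] at h1
      have h2 : (-(ContinuousMap.evalCLM ℝ k' : C(K, ℝ) →L[ℝ] ℝ)) 1 = -1 := by
        rw [ContinuousLinearMap.neg_apply]
        norm_num
      rw [h2] at h1
      norm_num at h1
    -- symmetry of `C`
    have hsymm : ∀ f ∈ C, -f ∈ C := by
      rintro f ⟨hf1, hf2⟩
      constructor
      · have hmapsto : Set.MapsTo (fun u : WeakDual ℝ X => -u) EXT EXT := by
          rintro _ ⟨e, he, rfl⟩
          exact ⟨-e, UEmb.neg_extreme he, map_neg StrongDual.toWeakDual e⟩
        exact map_mem_closure continuous_neg hf1 hmapsto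
      · show ‖WeakDual.toStrongDual (-f)‖ = 1
        rw [map_neg, norm_neg]
        exact hf2
    -- produce points in both pieces
    obtain ⟨f0, hf0⟩ := hconn.nonempty
    obtain ⟨fA, hfA, hfAr⟩ : ∃ f ∈ C, f ∈ Set.range Φ := by
      rcases hcover hf0 with h | h
      · exact ⟨f0, hf0, h⟩
      · obtain ⟨k, hk⟩ := h
        exact ⟨-f0, hsymm f0 hf0, ⟨k, by rw [← hk, neg_neg]⟩⟩
    have hfB : -fA ∈ C := hsymm fA hfA
    have hfBr : -fA ∈ Set.range (fun k => -Φ k) := by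
      obtain ⟨k, hk⟩ := hfAr
      exact ⟨k, show -Φ k = -fA by rw [hk]⟩
    -- contradiction with connectedness
    have hP := hconn.isPreconnected
    have hUopen : IsOpen (Set.range fun k => -Φ k)ᶜ := hclB.isOpen_compl
    have hVopen : IsOpen (Set.range Φ)ᶜ := hclA.isOpen_compl
    have hCsub : C ⊆ (Set.range fun k => -Φ k)ᶜ ∪ (Set.range Φ)ᶜ := by
      intro f hf
      by_contra h
      simp only [Set.mem_union, Set.mem_compl_iff, not_or, not_not] at h
      exact hdisj f hf ⟨h.2, h.1⟩
    have hCU : (C ∩ (Set.range fun k => -Φ k)ᶜ).Nonempty :=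
      ⟨fA, hfA, fun hmem => hdisj fA hfA ⟨hfAr, hmem⟩⟩
    have hCV : (C ∩ (Set.range Φ)ᶜ).Nonempty :=
      ⟨-fA, hfB, fun hmem => hdisj (-fA) hfB ⟨hmem, hfBr⟩⟩
    obtain ⟨f, hfC, hfUV⟩ := hP _ _ hUopen hVopen hCsub hCU hCV
    rcases hcover hfC with h | h
    · exact hfUV.2 h
    · exact hfUV.1 h
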